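/- Let n ≥ 3 be an integer, α > 0 a real number, and 0 < d < 1. Set T = -ln(d)/(2n). Then the function t ↦ (d e^{2nt})^{α/2} (1 - d e^{2nt})^{(n-α)/2} is integrable on the interval (0, T) if and only if α < n+2. -/

import Mathlib

open Real MeasureTheory

lemma integrableOn_sub_rpow_iff {T β : ℝ} (hT : 0 < T) :
    IntegrableOn (fun t : ℝ => (T - t) ^ β) (Set.Ioo (0 : ℝ) T) ↔ -1 < β := by
  rw [← intervalIntegral.integrableOn_Ioo_rpow_iff hT (s := β)]
  constructor
  · intro h
    have h' : IntervalIntegrable (fun t : ℝ => (T - t) ^ β) volume 0 T := by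
      rwa [intervalIntegrable_iff_integrableOn_Ioo_of_le hT.le]
    have h2 := (h'.comp_sub_left T).symm
    simp only [sub_zero, sub_self, sub_sub_cancel] at h2
    rwa [intervalIntegrable_iff_integrableOn_Ioo_of_le hT.le] at h2
  · intro h
    have h' : IntervalIntegrable (fun x : ℝ => x ^ β) volume 0 T := by
      rwa [intervalIntegrable_iff_integrableOn_Ioo_of_le hT.le]
    have h2 := (h'.comp_sub_left T).symm
    simp only [sub_zero, sub_self] at h2
    rwa [intervalIntegrable_iff_integrableOn_Ioo_of_le hT.le] at h2

/-- Spherical ambient example: for an integer `n ≥ 3`, a real `α > 0`, `0 < d < 1` and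
`T = -ln d/(2n)`, the function `t ↦ (d e^{2nt})^{α/2} (1 - d e^{2nt})^{(n-α)/2}` is
integrable on `(0, T)` if and only if `α < n + 2`. -/
theorem integrable_sphere_ambient_iff (n : ℕ) (hn : 3 ≤ n) (α : ℝ) (hα : 0 < α)
    (d : ℝ) (hd0 : 0 < d) (hd1 : d < 1) (T : ℝ) (hT : T = -Real.log d / (2 * n)) :
    IntegrableOn
      (fun t : ℝ => (d * Real.exp (2 * n * t)) ^ (α / 2) *
        (1 - d * Real.exp (2 * n * t)) ^ (((n : ℝ) - α) / 2))
      (Set.Ioo (0 : ℝ) T) ↔ α < n + 2 := by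
  set β : ℝ := ((n : ℝ) - α) / 2 with hβ
  have hn0 : (0 : ℝ) < n := by exact_mod_cast Nat.lt_of_lt_of_le (by norm_num) hn
  have h2n : (0 : ℝ) < 2 * n := by linarith
  have hlogd : Real.log d < 0 := Real.log_neg hd0 hd1
  have hT0 : 0 < T := by
    rw [hT]; exact div_pos (by linarith) h2n
  have h2nT : 2 * (n : ℝ) * T = -Real.log d := by
    rw [hT]; field_simp
  have hdexp : d = Real.exp (-(2 * (n : ℝ) * T)) := by
    rw [h2nT, neg_neg, Real.exp_log hd0]
  -- rewrite u t
  have hu : ∀ t : ℝ, d * Real.exp (2 * n * t) = Real.exp (-(2 * (n : ℝ) * (T - t))) := by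
    intro t
    rw [hdexp, ← Real.exp_add]
    ring_nf
  have hc1 : (0 : ℝ) < (1 - d) / T := by
    have : 0 < 1 - d := by linarith
    positivity
  set c1 : ℝ := (1 - d) / T with hc1def
  set c2 : ℝ := 2 * (n : ℝ) with hc2def
  -- bounds on 1 - u t for t ∈ Ioo 0 T
  have key : ∀ t ∈ Set.Ioo (0 : ℝ) T,
      c1 * (T - t) ≤ 1 - d * Real.exp (2 * n * t) ∧
      1 - d * Real.exp (2 * n * t) ≤ c2 * (T - t) := by
    intro t ht
    obtain ⟨ht0, htT⟩ := ht
    have hx : 0 < T - t := by linarith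
    set y : ℝ := 2 * (n : ℝ) * (T - t) with hy
    have hy0 : 0 < y := by positivity
    have hyY : y ≤ 2 * (n : ℝ) * T := by
      have : T - t ≤ T := by linarith
      nlinarith
    constructor
    · -- convexity bound
      have hY : (0 : ℝ) < 2 * (n : ℝ) * T := by positivity
      set lam : ℝ := y / (2 * (n : ℝ) * T) with hlam
      have hlam0 : 0 ≤ lam := by positivity
      have hlam1 : lam ≤ 1 := by
        rw [hlam, div_le_one hY]; exact hyY
      have hconv := convexOn_exp.2 (Set.mem_univ (0 : ℝ))
        (Set.mem_univ (-(2 * (n : ℝ) * T))) (by linarith : (0:ℝ) ≤ 1 - lam) hlam0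
        (by ring)
      have heq : (1 - lam) • (0 : ℝ) + lam • (-(2 * (n : ℝ) * T)) = -y := by
        simp only [smul_eq_mul, mul_zero, zero_add, hlam]
        field_simp
      rw [heq] at hconv
      simp only [smul_eq_mul, Real.exp_zero, mul_one] at hconv
      rw [← hdexp] at hconv
      -- hconv : exp (-y) ≤ (1 - lam) + lam * d
      rw [hu t]
      have : Real.exp (-(2 * (n:ℝ) * (T - t))) = Real.exp (-y) := by rw [hy]
      rw [this]
      have hlamval : lam = (T - t) / T := by
        rw [hlam, hy]; field_simp
      have : c1 * (T - t) = lam * (1 - d) := by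
        rw [hlamval, hc1def]; field_simp
      rw [this]
      nlinarith [hconv]
    · rw [hu t]
      have h1 : -y + 1 ≤ Real.exp (-y) := by
        have := Real.add_one_le_exp (-y)
        linarith
      have : Real.exp (-(2 * (n:ℝ) * (T - t))) = Real.exp (-y) := by rw [hy]
      rw [this]
      have hyy : c2 * (T - t) = y := by rw [hy, hc2def]
      linarith [h1, hyy]
  -- positivity of u on the set
  have hu_pos : ∀ t : ℝ, 0 < d * Real.exp (2 * n * t) := fun t => by positivity
  have hu_lb : ∀ t ∈ Set.Ioo (0:ℝ) T, d ≤ d * Real.exp (2 * n * t) := by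
    intro t ht
    nlinarith [Real.one_le_exp (by nlinarith [ht.1] : (0:ℝ) ≤ 2 * n * t), hd0]
  have hu_ub : ∀ t ∈ Set.Ioo (0:ℝ) T, d * Real.exp (2 * n * t) ≤ 1 := by
    intro t ht
    have := (key t ht).1
    nlinarith [mul_pos hc1 (sub_pos.2 ht.2)]
  -- constants
  set m : ℝ := min (c1 ^ β) (c2 ^ β) with hm
  set M : ℝ := max (c1 ^ β) (c2 ^ β) with hM
  have hc2pos : (0:ℝ) < c2 := by rw [hc2def]; positivity

  have hm0 : 0 < m := lt_min (Real.rpow_pos_of_pos hc1 β) (Real.rpow_pos_of_pos hc2pos β)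
  have hM0 : 0 < M := lt_of_lt_of_le hm0 (min_le_max)
  set K : ℝ := d ^ (α / 2) * m with hK
  have hK0 : 0 < K := mul_pos (Real.rpow_pos_of_pos hd0 _) hm0
  -- two-sided bounds on f
  set f : ℝ → ℝ := fun t : ℝ => (d * Real.exp (2 * n * t)) ^ (α / 2) *
        (1 - d * Real.exp (2 * n * t)) ^ β with hf
  have hbound : ∀ t ∈ Set.Ioo (0:ℝ) T,
      K * (T - t) ^ β ≤ f t ∧ f t ≤ M * (T - t) ^ β := by
    intro t ht
    obtain ⟨hlow, hupp⟩ := key t ht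
    have hx : 0 < T - t := by linarith [ht.2]
    have hBpos : 0 < 1 - d * Real.exp (2 * n * t) :=
      lt_of_lt_of_le (by positivity) hlow
    have hxβ : 0 ≤ (T - t) ^ β := Real.rpow_nonneg hx.le β
    -- bounds on second factor
    have hB : m * (T - t) ^ β ≤ (1 - d * Real.exp (2 * n * t)) ^ β ∧
        (1 - d * Real.exp (2 * n * t)) ^ β ≤ M * (T - t) ^ β := by
      rcases le_or_gt 0 β with hβ0 | hβ0
      · constructor
        · calc m * (T - t) ^ β ≤ c1 ^ β * (T - t) ^ β :=
                mul_le_mul_of_nonneg_right (min_le_left _ _) hxβ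
            _ = (c1 * (T - t)) ^ β := (Real.mul_rpow hc1.le hx.le).symm
            _ ≤ _ := Real.rpow_le_rpow (by positivity) hlow hβ0
        · calc (1 - d * Real.exp (2 * n * t)) ^ β ≤ (c2 * (T - t)) ^ β :=
                Real.rpow_le_rpow hBpos.le hupp hβ0
            _ = c2 ^ β * (T - t) ^ β := Real.mul_rpow hc2pos.le hx.le
            _ ≤ M * (T - t) ^ β :=
                mul_le_mul_of_nonneg_right (le_max_right _ _) hxβ
      · constructor
        · calc m * (T - t) ^ β ≤ c2 ^ β * (T - t) ^ β :=
                mul_le_mul_of_nonneg_right (min_le_right _ _) hxβ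
            _ = (c2 * (T - t)) ^ β := (Real.mul_rpow hc2pos.le hx.le).symm
            _ ≤ _ := Real.rpow_le_rpow_of_nonpos hBpos hupp hβ0.le
        · calc (1 - d * Real.exp (2 * n * t)) ^ β ≤ (c1 * (T - t)) ^ β :=
                Real.rpow_le_rpow_of_nonpos (by positivity) hlow hβ0.le
            _ = c1 ^ β * (T - t) ^ β := Real.mul_rpow hc1.le hx.le
            _ ≤ M * (T - t) ^ β :=
                mul_le_mul_of_nonneg_right (le_max_left _ _) hxβ
    -- bounds on first factor
    have hA1 : d ^ (α / 2) ≤ (d * Real.exp (2 * n * t)) ^ (α / 2) :=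
      Real.rpow_le_rpow hd0.le (hu_lb t ht) (by positivity)
    have hA2 : (d * Real.exp (2 * n * t)) ^ (α / 2) ≤ 1 :=
      Real.rpow_le_one (hu_pos t).le (hu_ub t ht) (by positivity)
    have hBnn : 0 ≤ (1 - d * Real.exp (2 * n * t)) ^ β := Real.rpow_nonneg hBpos.le β
    constructor
    · calc K * (T - t) ^ β = d ^ (α/2) * (m * (T - t) ^ β) := by rw [hK]; ring
        _ ≤ d ^ (α/2) * (1 - d * Real.exp (2 * n * t)) ^ β :=
            mul_le_mul_of_nonneg_left hB.1 (Real.rpow_nonneg hd0.le _)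
        _ ≤ f t := mul_le_mul_of_nonneg_right hA1 hBnn
    · calc f t ≤ 1 * (1 - d * Real.exp (2 * n * t)) ^ β :=
            mul_le_mul_of_nonneg_right hA2 hBnn
        _ = (1 - d * Real.exp (2 * n * t)) ^ β := one_mul _
        _ ≤ M * (T - t) ^ β := hB.2
  have hf_nonneg : ∀ t ∈ Set.Ioo (0:ℝ) T, 0 ≤ f t := by
    intro t ht
    have hx : (0:ℝ) ≤ T - t := by linarith [ht.2]
    exact le_trans (mul_nonneg hK0.le (Real.rpow_nonneg hx β)) (hbound t ht).1
  -- measurability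
  have hcontu : Continuous (fun t : ℝ => d * Real.exp (2 * (n:ℝ) * t)) :=
    continuous_const.mul (Real.continuous_exp.comp (continuous_const.mul continuous_id))
  have hf_meas : AEStronglyMeasurable f (volume.restrict (Set.Ioo (0:ℝ) T)) := by
    refine ContinuousOn.aestronglyMeasurable ?_ measurableSet_Ioo
    apply ContinuousOn.mul
    · exact hcontu.continuousOn.rpow_const (fun t _ => Or.inl (ne_of_gt (hu_pos t)))
    · refine (continuous_const.sub hcontu).continuousOn.rpow_const (fun t ht => Or.inl ?_)
      have h1 := (key t ht).1
      have hx : 0 < T - t := by linarith [ht.2]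
      exact ne_of_gt (lt_of_lt_of_le (by positivity) h1)
  have hg_meas : AEStronglyMeasurable (fun t : ℝ => (T - t) ^ β)
      (volume.restrict (Set.Ioo (0:ℝ) T)) := by
    refine ContinuousOn.aestronglyMeasurable ?_ measurableSet_Ioo
    refine (continuous_const.sub continuous_id).continuousOn.rpow_const (fun t ht => Or.inl ?_)
    have hx : 0 < T - t := by linarith [ht.2]
    exact ne_of_gt hx
  have hiff : α < (n:ℝ) + 2 ↔ -1 < β := by
    rw [hβ]; constructor <;> intro <;> linarith
  constructor
  · intro hfint
    rw [hiff, ← integrableOn_sub_rpow_iff hT0]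
    refine Integrable.mono' (hfint.const_mul K⁻¹) hg_meas ?_
    filter_upwards [ae_restrict_mem measurableSet_Ioo] with t ht
    have hx : 0 < T - t := by linarith [ht.2]
    rw [Real.norm_of_nonneg (Real.rpow_nonneg hx.le β)]
    rw [inv_mul_eq_div, le_div_iff₀' hK0]
    exact (hbound t ht).1
  · intro hαlt
    have hg : IntegrableOn (fun t : ℝ => (T - t) ^ β) (Set.Ioo (0:ℝ) T) :=
      (integrableOn_sub_rpow_iff hT0).2 (hiff.1 hαlt)
    refine Integrable.mono' (hg.const_mul M) hf_meas ?_
    filter_upwards [ae_restrict_mem measurableSet_Ioo] with t ht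
    rw [Real.norm_of_nonneg (hf_nonneg t ht)]
    exact (hbound t ht).2
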